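/- Support shrinkage for PGD: choose z⁽⁰⁾ with ‖x − D z⁽⁰⁾‖₂ ≤ 1 and set S = supp(z⁽⁰⁾). If τ > 1 and s > max{2|S|, 2(1+λ|S|)/(λτ)}, then the PGD sequence satisfies supp(z⁽ᵗ⁾) ⊆ supp(z⁽ᵗ⁻¹⁾) for every t ≥ 1; in particular supp(z⁽ᵗ⁾) ⊆ S for all t ≥ 0. -/

import Mathlib

open scoped BigOperators

noncomputable def l2norm {m : ℕ} (v : Fin m → ℝ) : ℝ := Real.sqrt (∑ i, (v i)^2)

noncomputable def supp {n : ℕ} (z : Fin n → ℝ) : Finset (Fin n) := Finset.univ.filter (fun j => z j ≠ 0)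

noncomputable def l0norm {n : ℕ} (z : Fin n → ℝ) : ℕ := (supp z).card

noncomputable def hardThresh {n : ℕ} (θ : ℝ) (u : Fin n → ℝ) : Fin n → ℝ :=
  fun j => if |u j| < θ then 0 else u j

noncomputable def Lobj {d n : ℕ} (D : Matrix (Fin d) (Fin n) ℝ) (x : Fin d → ℝ) (lam : ℝ)
    (z : Fin n → ℝ) : ℝ := (l2norm (x - D.mulVec z))^2 + lam * (l0norm z : ℝ)

noncomputable def pgdSeq {d n : ℕ} (D : Matrix (Fin d) (Fin n) ℝ) (x : Fin d → ℝ)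
    (lam τ s : ℝ) (z0 : Fin n → ℝ) : ℕ → (Fin n → ℝ)
  | 0 => z0
  | (t+1) =>
      hardThresh (Real.sqrt (2*lam/(τ*s)))
        (fun j => pgdSeq D x lam τ s z0 t j
          - (2/(τ*s)) * (D.transpose.mulVec (D.mulVec (pgdSeq D x lam τ s z0 t) - x)) j)

noncomputable def sigmaMinCols {d n : ℕ} (D : Matrix (Fin d) (Fin n) ℝ) (S : Finset (Fin n)) : ℝ :=
  sInf {t | ∃ y : Fin n → ℝ, (∀ j ∉ S, y j = 0) ∧ l2norm y = 1 ∧ t = l2norm (D.mulVec y)}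

noncomputable def sigmaMaxCols {d n : ℕ} (D : Matrix (Fin d) (Fin n) ℝ) (S : Finset (Fin n)) : ℝ :=
  sSup {t | ∃ y : Fin n → ℝ, (∀ j ∉ S, y j = 0) ∧ l2norm y = 1 ∧ t = l2norm (D.mulVec y)}

noncomputable def sigmaMax {d n : ℕ} (D : Matrix (Fin d) (Fin n) ℝ) : ℝ :=
  sSup {t | ∃ y : Fin n → ℝ, l2norm y = 1 ∧ t = l2norm (D.mulVec y)}

def admissibleSubgrad {n : ℕ} (lam b : ℝ) (z r : Fin n → ℝ) : Prop :=
  (∀ j, z j ≠ 0 → r j = 0) ∧ (∀ j, z j = 0 → -(lam/b) ≤ r j ∧ r j ≤ lam/b)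

noncomputable def frobNorm {a b : ℕ} (M : Matrix (Fin a) (Fin b) ℝ) : ℝ :=
  Real.sqrt (∑ i, ∑ j, (M i j)^2)

section AuxPGD

lemma sq_le_one_of_sqrt_le_one {a : ℝ} (ha : 0 ≤ a) (h : Real.sqrt a ≤ 1) : a ≤ 1 := by
  nlinarith [Real.sq_sqrt ha, Real.sqrt_nonneg a]

lemma mem_supp_iff' {n : ℕ} (z : Fin n → ℝ) (j : Fin n) : j ∈ supp z ↔ z j ≠ 0 := by
  simp [supp]

noncomputable def Fobj {d n : ℕ} (D : Matrix (Fin d) (Fin n) ℝ) (x : Fin d → ℝ) (lam : ℝ)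
    (z : Fin n → ℝ) : ℝ :=
  (∑ i, (x i - D.mulVec z i)^2) + lam * ((supp z).card : ℝ)

noncomputable def stepMap {d n : ℕ} (D : Matrix (Fin d) (Fin n) ℝ) (x : Fin d → ℝ)
    (lam τ s : ℝ) (z : Fin n → ℝ) : Fin n → ℝ :=
  hardThresh (Real.sqrt (2*lam/(τ*s)))
    (fun j => z j - (2/(τ*s)) * (D.transpose.mulVec (D.mulVec z - x)) j)

set_option maxHeartbeats 1000000 in
lemma key_step {d n : ℕ} (D : Matrix (Fin d) (Fin n) ℝ) (x : Fin d → ℝ)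
    (lam τ s : ℝ) (S : Finset (Fin n)) (z : Fin n → ℝ)
    (hD : ∀ j, (∑ i, (D i j)^2) ≤ 1)
    (hlam : 0 < lam) (hts : 0 < τ * s)
    (hKts : 2 * (S.card : ℝ) < τ * s)
    (hzS : ∀ j, j ∉ S → z j = 0)
    (hQ : 2 * (∑ i, (x i - D.mulVec z i)^2) < lam * (τ*s)) :
    (∀ j, z j = 0 → stepMap D x lam τ s z j = 0) ∧
    Fobj D x lam (stepMap D x lam τ s z) ≤ Fobj D x lam z := by
  have hpos : 0 < 2*lam/(τ*s) := div_pos (by linarith) hts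
  set θ := Real.sqrt (2*lam/(τ*s)) with hθdef
  have hθnn : 0 ≤ θ := Real.sqrt_nonneg _
  have hθsq : θ^2 = 2*lam/(τ*s) := Real.sq_sqrt (le_of_lt hpos)
  have hθpos : 0 < θ := Real.sqrt_pos.mpr hpos
  set g : Fin n → ℝ := fun j => (D.transpose.mulVec (D.mulVec z - x)) j with hgdef
  set u : Fin n → ℝ := fun j => z j - (2/(τ*s)) * g j with hudef
  have hstep : ∀ j, stepMap D x lam τ s z j = if |u j| < θ then 0 else u j := by
    intro j; rfl
  have hgj : ∀ j, g j = ∑ i, D i j * (D.mulVec z i - x i) := by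
    intro j
    simp [hgdef, Matrix.mulVec, dotProduct, Matrix.transpose_apply]
  have hg2 : ∀ j, (g j)^2 ≤ ∑ i, (x i - D.mulVec z i)^2 := by
    intro j
    have hcs := Finset.sum_mul_sq_le_sq_mul_sq Finset.univ (fun i => D i j)
      (fun i => D.mulVec z i - x i)
    have h1 : (∑ i, (D.mulVec z i - x i)^2) = ∑ i, (x i - D.mulVec z i)^2 :=
      Finset.sum_congr rfl (fun i _ => by ring)
    have h3 : 0 ≤ ∑ i, (D.mulVec z i - x i)^2 := Finset.sum_nonneg (fun i _ => sq_nonneg _)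
    rw [hgj j]
    calc (∑ i, D i j * (D.mulVec z i - x i))^2
        ≤ (∑ i, (D i j)^2) * (∑ i, (D.mulVec z i - x i)^2) := hcs
      _ ≤ 1 * (∑ i, (D.mulVec z i - x i)^2) := by nlinarith [hD j]
      _ = ∑ i, (x i - D.mulVec z i)^2 := by rw [one_mul, h1]
  have parta : ∀ j, z j = 0 → stepMap D x lam τ s z j = 0 := by
    intro j hj
    have huj : u j = -(2/(τ*s)) * g j := by simp [hudef, hj]
    have h4 : 4 * (g j)^2 < 2*lam*(τ*s) := by
      have := hg2 j; linarith
    have h5 : (2/(τ*s))^2 * (g j)^2 < 2*lam/(τ*s) := by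
      rw [div_pow, div_mul_eq_mul_div, div_lt_div_iff₀ (by positivity) hts]
      nlinarith [mul_lt_mul_of_pos_right h4 hts]
    have hujsq : (u j)^2 < θ^2 := by
      rw [hθsq, huj]
      have : (-(2/(τ*s)) * g j)^2 = (2/(τ*s))^2 * (g j)^2 := by ring
      linarith
    have habs : |u j| < θ := by
      have h6 := Real.sqrt_lt_sqrt (sq_nonneg (u j)) hujsq
      rwa [Real.sqrt_sq_eq_abs, Real.sqrt_sq hθnn] at h6
    rw [hstep j]
    simp [habs]
  refine ⟨parta, ?_⟩
  set z' : Fin n → ℝ := stepMap D x lam τ s z with hz'def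
  set δ : Fin n → ℝ := fun j => z' j - z j with hδdef
  have hδS : ∀ j, j ∉ S → δ j = 0 := by
    intro j hj
    have h0 := hzS j hj
    simp [hδdef, h0, parta j h0]
  have hzs2 : 0 < τ*s/2 := by linarith
  have hθ2 : (τ*s/2) * θ^2 = lam := by
    rw [hθsq, mul_div_assoc', div_eq_iff (ne_of_gt hts)]; ring
  have prox : ∀ j, (τ*s/2)*(z' j - u j)^2 + (if z' j = 0 then 0 else lam)
      ≤ (τ*s/2)*(z j - u j)^2 + (if z j = 0 then 0 else lam) := by
    intro j
    by_cases hcase : |u j| < θ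
    · have h0 : z' j = 0 := by rw [hstep j]; simp [hcase]
      have hu2 : (u j)^2 < θ^2 := by nlinarith [abs_nonneg (u j), sq_abs (u j)]
      by_cases hz : z j = 0
      · rw [h0, hz]
      · rw [h0, if_neg hz]
        norm_num
        nlinarith [sq_nonneg (z j - u j), mul_lt_mul_of_pos_left hu2 hzs2, hθ2]
    · have h0 : z' j = u j := by rw [hstep j]; simp [hcase]
      have hune : u j ≠ 0 := by
        intro h; rw [h] at hcase; simp [abs_of_nonneg, hθpos] at hcase
      have hu2 : θ^2 ≤ (u j)^2 := by
        push_neg at hcase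
        nlinarith [sq_abs (u j), hθnn]
      rw [h0, if_neg hune]
      by_cases hz : z j = 0
      · rw [hz]
        norm_num
        nlinarith [mul_le_mul_of_nonneg_left hu2 (le_of_lt hzs2), hθ2]
      · rw [if_neg hz]
        nlinarith [sq_nonneg (z j - u j)]
  have hχ : ∀ w : Fin n → ℝ, (∑ j, (if w j = 0 then (0:ℝ) else lam)) = lam * ((supp w).card : ℝ) := by
    intro w
    have h1 : (∑ j, (if w j = 0 then (0:ℝ) else lam)) = ∑ j ∈ supp w, lam := by
      rw [supp, Finset.sum_filter]
      exact Finset.sum_congr rfl (fun j _ => by by_cases h : w j = 0 <;> simp [h])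
    rw [h1, Finset.sum_const, nsmul_eq_mul, mul_comm]
  have hsum : (τ*s/2) * (∑ j, (z' j - u j)^2) + lam * ((supp z').card : ℝ)
      ≤ (τ*s/2) * (∑ j, (z j - u j)^2) + lam * ((supp z).card : ℝ) := by
    have h := Finset.sum_le_sum (s := Finset.univ) (fun j _ => prox j)
    rw [Finset.sum_add_distrib, Finset.sum_add_distrib, ← Finset.mul_sum, ← Finset.mul_sum,
      hχ z', hχ z] at h
    exact h
  have hzu : ∀ j, z j - u j = (2/(τ*s)) * g j := by
    intro j; simp [hudef]
  have e1 : (∑ j, (z j - u j)^2) = (2/(τ*s))^2 * ∑ j, (g j)^2 := by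
    rw [Finset.mul_sum]
    exact Finset.sum_congr rfl (fun j _ => by rw [hzu j]; ring)
  have e2 : (∑ j, (z' j - u j)^2)
      = (∑ j, (δ j)^2) + (2*(2/(τ*s))) * (∑ j, δ j * g j) + (2/(τ*s))^2 * ∑ j, (g j)^2 := by
    rw [Finset.mul_sum, Finset.mul_sum, ← Finset.sum_add_distrib, ← Finset.sum_add_distrib]
    refine Finset.sum_congr rfl (fun j _ => ?_)
    have hj1 : z' j - u j = δ j + (2/(τ*s)) * g j := by
      have := hzu j
      simp only [hδdef]
      linarith
    rw [hj1]; ring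
  have hz'eq : z' = z + δ := by funext j; simp [hδdef]
  have hmv : ∀ i, D.mulVec z' i = D.mulVec z i + D.mulVec δ i := by
    intro i; rw [hz'eq, Matrix.mulVec_add]; simp
  have hmvδ : ∀ i, D.mulVec δ i = ∑ j, D i j * δ j := by
    intro i; simp [Matrix.mulVec, dotProduct]
  have hδg : (∑ j, δ j * g j) = ∑ i, (D.mulVec z i - x i) * (D.mulVec δ i) := by
    calc (∑ j, δ j * g j) = ∑ j, ∑ i, δ j * (D i j * (D.mulVec z i - x i)) := by
          refine Finset.sum_congr rfl (fun j _ => ?_)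
          rw [hgj j, Finset.mul_sum]
      _ = ∑ i, ∑ j, δ j * (D i j * (D.mulVec z i - x i)) := Finset.sum_comm
      _ = ∑ i, (D.mulVec z i - x i) * (D.mulVec δ i) := by
          refine Finset.sum_congr rfl (fun i _ => ?_)
          rw [hmvδ i, Finset.mul_sum]
          exact Finset.sum_congr rfl (fun j _ => by ring)
  have hA : (∑ i, (x i - D.mulVec z' i)^2)
      = (∑ i, (x i - D.mulVec z i)^2) + 2*(∑ j, δ j * g j) + ∑ i, (D.mulVec δ i)^2 := by
    rw [hδg, Finset.mul_sum, ← Finset.sum_add_distrib, ← Finset.sum_add_distrib]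
    refine Finset.sum_congr rfl (fun i _ => ?_)
    rw [hmv i]; ring
  have hQD : (∑ i, (D.mulVec δ i)^2) ≤ (S.card : ℝ) * ∑ j, (δ j)^2 := by
    have hres : ∀ i, D.mulVec δ i = ∑ j ∈ S, D i j * δ j := by
      intro i
      rw [hmvδ i]
      symm
      apply Finset.sum_subset (Finset.subset_univ S)
      intro j _ hj
      rw [hδS j hj, mul_zero]
    have h1 : ∀ i, (D.mulVec δ i)^2 ≤ (S.card : ℝ) * ∑ j ∈ S, (D i j * δ j)^2 := by
      intro i
      rw [hres i]
      exact sq_sum_le_card_mul_sum_sq (s := S) (f := fun j => D i j * δ j)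
    calc (∑ i, (D.mulVec δ i)^2) ≤ ∑ i, (S.card : ℝ) * ∑ j ∈ S, (D i j * δ j)^2 :=
          Finset.sum_le_sum (fun i _ => h1 i)
      _ = (S.card:ℝ) * ∑ j ∈ S, (δ j)^2 * ∑ i, (D i j)^2 := by
          rw [← Finset.mul_sum]
          congr 1
          rw [Finset.sum_comm]
          refine Finset.sum_congr rfl (fun j _ => ?_)
          rw [Finset.mul_sum]
          exact Finset.sum_congr rfl (fun i _ => by ring)
      _ ≤ (S.card:ℝ) * ∑ j ∈ S, (δ j)^2 := by
          apply mul_le_mul_of_nonneg_left _ (Nat.cast_nonneg _)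
          apply Finset.sum_le_sum
          intro j _
          nlinarith [hD j, sq_nonneg (δ j),
            Finset.sum_nonneg (s := Finset.univ) (fun i _ => sq_nonneg (D i j))]
      _ ≤ (S.card:ℝ) * ∑ j, (δ j)^2 := by
          apply mul_le_mul_of_nonneg_left _ (Nat.cast_nonneg _)
          exact Finset.sum_le_sum_of_subset_of_nonneg (Finset.subset_univ S)
            (fun j _ _ => sq_nonneg _)
  have hstar : (τ*s/2) * (∑ j, (δ j)^2) + 2*(∑ j, δ j * g j) + lam * ((supp z').card : ℝ)
      ≤ lam * ((supp z).card : ℝ) := by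
    have h := hsum
    rw [e1, e2] at h
    have htsne : (τ*s) ≠ 0 := ne_of_gt hts
    have hexp : (τ*s/2)*((∑ j, (δ j)^2) + (2*(2/(τ*s)))*(∑ j, δ j * g j)
          + (2/(τ*s))^2 * ∑ j, (g j)^2)
        = (τ*s/2)*(∑ j, (δ j)^2) + 2*(∑ j, δ j * g j) + (2/(τ*s)) * ∑ j, (g j)^2 := by
      have hinv : (τ*s/2)*(2/(τ*s)) = 1 := by
        rw [div_mul_div_comm, mul_comm (τ*s) 2]; exact div_self (mul_ne_zero two_ne_zero htsne)
      linear_combination (2*(∑ j, δ j * g j) + (2/(τ*s))*∑ j, (g j)^2) * hinv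
    have hexp2 : (τ*s/2)*((2/(τ*s))^2 * ∑ j, (g j)^2) = (2/(τ*s)) * ∑ j, (g j)^2 := by
      field_simp
    rw [hexp, hexp2] at h
    linarith
  have hSδnn : 0 ≤ ∑ j, (δ j)^2 := Finset.sum_nonneg (fun j _ => sq_nonneg _)
  have hprod : 0 ≤ (τ*s/2 - (S.card:ℝ)) * ∑ j, (δ j)^2 :=
    mul_nonneg (by linarith) hSδnn
  simp only [Fobj]
  linarith [hA, hQD, hstar, hprod]

end AuxPGD

theorem stmt1 {d n : ℕ} (D : Matrix (Fin d) (Fin n) ℝ) (x : Fin d → ℝ)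
    (lam τ s : ℝ) (z0 : Fin n → ℝ)
    (hx : l2norm x ≤ 1) (hD : ∀ j, l2norm (fun i => D i j) ≤ 1)
    (hlam : 0 < lam) (hτ : 1 < τ)
    (hz0 : l2norm (x - D.mulVec z0) ≤ 1)
    (hs : s > max (2 * ((supp z0).card : ℝ))
                  (2 * (1 + lam * ((supp z0).card : ℝ)) / (lam * τ))) :
    (∀ t : ℕ, supp (pgdSeq D x lam τ s z0 (t+1)) ⊆ supp (pgdSeq D x lam τ s z0 t)) ∧
    (∀ t : ℕ, supp (pgdSeq D x lam τ s z0 t) ⊆ supp z0) := by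
  classical
  set S := supp z0 with hS
  set K : ℝ := (S.card : ℝ) with hKdef
  have hK0 : (0:ℝ) ≤ K := Nat.cast_nonneg _
  have hs1 : 2*K < s := lt_of_le_of_lt (le_max_left _ _) hs
  have hs2 : 2*(1+lam*K)/(lam*τ) < s := lt_of_le_of_lt (le_max_right _ _) hs
  have hτ0 : 0 < τ := by linarith
  have hlτ : 0 < lam*τ := mul_pos hlam hτ0
  have hnum : 0 < 2*(1+lam*K) := by nlinarith
  have hspos : 0 < s := lt_trans (div_pos hnum hlτ) hs2
  have hts : 0 < τ*s := mul_pos hτ0 hspos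
  have hbound : 2*(1+lam*K) < lam*(τ*s) := by
    have h := (div_lt_iff₀ hlτ).mp hs2
    nlinarith
  have hKts : 2*K < τ*s := by nlinarith
  have hD2 : ∀ j, (∑ i, (D i j)^2) ≤ 1 := by
    intro j
    have h := hD j
    simp only [l2norm] at h
    exact sq_le_one_of_sqrt_le_one (Finset.sum_nonneg (fun i _ => sq_nonneg _)) h
  have hzero : ∀ (w : Fin n → ℝ) (j : Fin n), j ∉ supp w → w j = 0 := by
    intro w j hj
    by_contra h
    exact hj (by simp [supp, h])
  have hF0 : Fobj D x lam z0 ≤ 1 + lam*K := by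
    have h1 : (∑ i, (x i - D.mulVec z0 i)^2) ≤ 1 := by
      have h := hz0
      simp only [l2norm, Pi.sub_apply] at h
      exact sq_le_one_of_sqrt_le_one (Finset.sum_nonneg (fun i _ => sq_nonneg _)) h
    simp only [Fobj, ← hS, ← hKdef]
    linarith
  have main : ∀ t, (∀ j, j ∉ S → pgdSeq D x lam τ s z0 t j = 0) ∧
      Fobj D x lam (pgdSeq D x lam τ s z0 t) ≤ 1 + lam*K := by
    intro t
    induction t with
    | zero => exact ⟨fun j hj => hzero z0 j hj, hF0⟩
    | succ t ih =>
      obtain ⟨ihz, ihF⟩ := ih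
      have hQ : 2*(∑ i, (x i - D.mulVec (pgdSeq D x lam τ s z0 t) i)^2) < lam*(τ*s) := by
        have hcard : 0 ≤ lam * ((supp (pgdSeq D x lam τ s z0 t)).card : ℝ) :=
          mul_nonneg (le_of_lt hlam) (Nat.cast_nonneg _)
        have h2 : (∑ i, (x i - D.mulVec (pgdSeq D x lam τ s z0 t) i)^2) ≤ 1 + lam*K := by
          have h3 := ihF
          simp only [Fobj] at h3
          linarith
        linarith
      have hk := key_step D x lam τ s S (pgdSeq D x lam τ s z0 t) hD2 hlam hts hKts ihz hQ
      have hstep : pgdSeq D x lam τ s z0 (t+1) = stepMap D x lam τ s (pgdSeq D x lam τ s z0 t) :=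
        rfl
      refine ⟨fun j hj => ?_, ?_⟩
      · rw [hstep]
        exact hk.1 j (ihz j hj)
      · rw [hstep]
        exact le_trans hk.2 ihF
  have contract : ∀ t j, pgdSeq D x lam τ s z0 t j = 0 → pgdSeq D x lam τ s z0 (t+1) j = 0 := by
    intro t j h
    obtain ⟨ihz, ihF⟩ := main t
    have hQ : 2*(∑ i, (x i - D.mulVec (pgdSeq D x lam τ s z0 t) i)^2) < lam*(τ*s) := by
      have hcard : 0 ≤ lam * ((supp (pgdSeq D x lam τ s z0 t)).card : ℝ) :=
        mul_nonneg (le_of_lt hlam) (Nat.cast_nonneg _)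
      have h2 : (∑ i, (x i - D.mulVec (pgdSeq D x lam τ s z0 t) i)^2) ≤ 1 + lam*K := by
        have h3 := ihF
        simp only [Fobj] at h3
        linarith
      linarith
    have hk := key_step D x lam τ s S (pgdSeq D x lam τ s z0 t) hD2 hlam hts hKts ihz hQ
    exact hk.1 j h
  constructor
  · intro t j hj
    rw [mem_supp_iff'] at hj ⊢
    exact fun h0 => hj (contract t j h0)
  · intro t j hj
    rw [mem_supp_iff'] at hj
    by_contra h
    exact hj ((main t).1 j h)
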